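/- (Computation of the weight function v_M.) Let q > 1 be a real number, let n ∈ ℕ and a, b ∈ ℝ. Then the function λ ↦ q^{λ(n+a)}·(1 + q^{−λ})/(1 − q^{−2λ}) + q^{λ(−n+b)}·(1 + q^{λ})/(1 − q^{2λ}), defined for real λ ≠ 0, tends to 2n + 1 + a − b as λ → 0 with λ ≠ 0. -/

import Mathlib

lemma aux_deriv (q c : ℝ) (hq : 0 < q) :
    HasDerivAt (fun lam : ℝ => q ^ (lam * c)) (c * Real.log q) 0 := by
  have h : (fun lam : ℝ => q ^ (lam * c)) =
      fun lam : ℝ => Real.exp (lam * (c * Real.log q)) := by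
    funext lam
    rw [Real.rpow_def_of_pos hq]
    ring_nf
  rw [h]
  have := ((hasDerivAt_id (0 : ℝ)).mul_const (c * Real.log q)).exp
  simpa using this

theorem stmt5 (q : ℝ) (hq : 1 < q) (n : ℕ) (a b : ℝ) :
    Filter.Tendsto
      (fun lam : ℝ =>
        q ^ (lam * ((n : ℝ) + a)) * (1 + q ^ (-lam)) / (1 - q ^ (-(2 * lam))) +
          q ^ (lam * (-(n : ℝ) + b)) * (1 + q ^ lam) / (1 - q ^ (2 * lam)))
      (nhdsWithin (0 : ℝ) {0}ᶜ) (nhds (2 * (n : ℝ) + 1 + a - b)) := by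
  have hq0 : (0:ℝ) < q := lt_trans one_pos hq
  set L := Real.log q with hLdef
  have hL : 0 < L := Real.log_pos hq
  set g : ℝ → ℝ := fun lam => q ^ (lam * (-(n:ℝ) + b)) - q ^ (lam * ((n:ℝ) + a + 1)) with hgdef
  set h : ℝ → ℝ := fun lam => 1 - q ^ lam with hhdef
  have hg : HasDerivAt g ((-(n:ℝ) + b) * L - ((n:ℝ) + a + 1) * L) 0 :=
    (aux_deriv q _ hq0).sub (aux_deriv q _ hq0)
  have hh : HasDerivAt h (-L) 0 := by
    convert (hasDerivAt_const (0:ℝ) (1:ℝ)).sub (aux_deriv q 1 hq0) using 1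
    · rfl
    · rfl
    · funext x; simp [hhdef]
    · simp [hLdef]
  have Tg := hasDerivAt_iff_tendsto_slope.mp hg
  have Th := hasDerivAt_iff_tendsto_slope.mp hh
  have hLne : -L ≠ 0 := by
    simp only [neg_ne_zero]; exact ne_of_gt hL
  have T := Tg.div Th hLne
  have hval : ((-(n:ℝ) + b) * L - ((n:ℝ) + a + 1) * L) / (-L)
      = 2 * (n:ℝ) + 1 + a - b := by
    rw [div_eq_iff hLne]
    ring
  rw [hval] at T
  refine T.congr' ?_
  filter_upwards [self_mem_nhdsWithin] with lam hlam
  have hlam0 : lam ≠ 0 := hlam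
  have hg0 : g 0 = 0 := by simp [hgdef]
  have hh0 : h 0 = 0 := by simp [hhdef]
  set u : ℝ := q ^ lam with hudef
  have hu0 : 0 < u := Real.rpow_pos_of_pos hq0 lam
  have hu1 : u ≠ 1 := by
    rw [hudef, Real.rpow_def_of_pos hq0]
    simp only [ne_eq, Real.exp_eq_one_iff]
    exact mul_ne_zero (ne_of_gt hL) hlam0
  have hum : q ^ (-lam) = u⁻¹ := Real.rpow_neg hq0.le lam
  have hu2 : q ^ (2 * lam) = u * u := by
    rw [two_mul, Real.rpow_add hq0]
  have hum2 : q ^ (-(2 * lam)) = u⁻¹ * u⁻¹ := by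
    rw [Real.rpow_neg hq0.le, hu2, mul_inv]
  have hAB : q ^ (lam * ((n:ℝ) + a + 1)) = q ^ (lam * ((n:ℝ) + a)) * u := by
    rw [hudef, ← Real.rpow_add hq0]
    ring_nf
  -- nonvanishing facts
  have h1u : (1:ℝ) - u ≠ 0 := by
    intro hc
    exact hu1 (by linarith)
  have h1ui : (1:ℝ) - u⁻¹ ≠ 0 := by
    intro hc
    have : u⁻¹ = 1 := by linarith
    exact hu1 (by field_simp at this; linarith)
  have h2u : (1:ℝ) + u ≠ 0 := by positivity
  have h2ui : (1:ℝ) + u⁻¹ ≠ 0 := by positivity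
  have hune : u ≠ 0 := ne_of_gt hu0
  -- compute slopes
  have hsg : slope g 0 lam = g lam / lam := by
    rw [slope_def_field, hg0]
    simp
  have hsh : slope h 0 lam = h lam / lam := by
    rw [slope_def_field, hh0]
    simp
  have hhne : h lam ≠ 0 := by
    show (1:ℝ) - q ^ lam ≠ 0
    rw [← hudef]; exact h1u
  have key : g lam / lam / (h lam / lam) = g lam / h lam := by
    field_simp
  show slope g 0 lam / slope h 0 lam = _
  rw [hsg, hsh, key]
  show (q ^ (lam * (-(n:ℝ) + b)) - q ^ (lam * ((n:ℝ) + a + 1))) / (1 - q ^ lam) = _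
  rw [hAB, hum, hu2, hum2]
  have hfac : (1:ℝ) - u⁻¹ * u⁻¹ = (1 - u⁻¹) * (1 + u⁻¹) := by ring
  have hfac2 : (1:ℝ) - u * u = (1 - u) * (1 + u) := by ring
  rw [hfac, hfac2, ← hudef]
  have e1 : q ^ (lam * ((n:ℝ) + a)) * (1 + u⁻¹) / ((1 - u⁻¹) * (1 + u⁻¹))
      = -(q ^ (lam * ((n:ℝ) + a)) * u) / (1 - u) := by
    rw [div_eq_div_iff (mul_ne_zero h1ui h2ui) h1u]
    field_simp
    ring
  have e2 : q ^ (lam * (-(n:ℝ) + b)) * (1 + u) / ((1 - u) * (1 + u))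
      = q ^ (lam * (-(n:ℝ) + b)) / (1 - u) := by
    rw [div_eq_div_iff (mul_ne_zero h1u h2u) h1u]
    ring
  rw [e1, e2, ← add_div]
  ring_nf
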